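/- arXiv:2405.16058 — 9 statements merged into one kernel-verified Lean document; each statement's English description precedes it below -/
import Mathlib

section
/- Let F_1, …, F_N : ℝ^d → ℝ each be μ-strongly convex and L-smooth (0 < μ ≤ L), let F = Σ_{i=1}^N p_i F_i have global minimizer w* with minimum value F*, let F_i* denote the minimum value of F_i, and set Γ = F* − Σ_{i=1}^N p_i F_i* (so Γ ≥ 0). Let w_1, …, w_N ∈ ℝ^d be fixed points, w̄ = Σ_i p_i w_i, ḡ = Σ_i p_i ∇F_i(w_i), and let g be a random vector in ℝ^d with E[g] = ḡ. If 0 < η ≤ 1/(4L), then E‖(w̄ − η g) − w*‖² ≤ (1 − ημ)‖w̄ − w*‖² + η²·E‖g − ḡ‖² + 6Lη²Γ + 2·Σ_{i=1}^N p_i‖w̄ − w_i‖². -/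
open MeasureTheory
open scoped RealInnerProductSpace

section auxx
variable {E : Type*} [NormedAddCommGroup E] [InnerProductSpace ℝ E]

lemma young_aux (u v : E) (t : ℝ) : -(2*t)*⟪u,v⟫ ≤ ‖u‖^2 + t^2*‖v‖^2 := by
  have e : ‖u + t • v‖^2 = ‖u‖^2 + 2*(t*⟪u,v⟫) + t^2*‖v‖^2 := by
    rw [norm_add_sq_real, real_inner_smul_right, norm_smul, Real.norm_eq_abs, mul_pow, sq_abs]
  have h := sq_nonneg ‖u + t • v‖
  rw [e] at h
  linarith

lemma jensen_norm_sq {N : ℕ} (p : Fin N → ℝ) (hp0 : ∀ i, 0 ≤ p i) (hp1 : ∑ i, p i = 1)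
    (x : Fin N → E) : ‖∑ i, p i • x i‖^2 ≤ ∑ i, p i * ‖x i‖^2 := by
  set m := ∑ i, p i • x i with hm
  have h1 : ∑ i, p i * ⟪x i, m⟫ = ‖m‖^2 := by
    rw [← real_inner_self_eq_norm_sq]
    nth_rewrite 2 [hm]
    rw [sum_inner]
    exact Finset.sum_congr rfl fun i _ => (real_inner_smul_left _ _ _).symm
  have h3 : (0:ℝ) ≤ ∑ i, p i * ‖x i - m‖^2 :=
    Finset.sum_nonneg fun i _ => mul_nonneg (hp0 i) (sq_nonneg _)
  have h4 : ∑ i, p i * ‖x i - m‖^2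
      = ∑ i, p i * ‖x i‖^2 - 2 * (∑ i, p i * ⟪x i, m⟫) + (∑ i, p i) * ‖m‖^2 := by
    rw [Finset.mul_sum, Finset.sum_mul, ← Finset.sum_sub_distrib, ← Finset.sum_add_distrib]
    exact Finset.sum_congr rfl fun i _ => by rw [norm_sub_sq_real]; ring
  rw [h1, hp1, one_mul] at h4
  linarith

end auxx

-- deterministic core
set_option maxHeartbeats 1000000 in
theorem det_bound {d N : ℕ}
    (p : Fin N → ℝ) (hp0 : ∀ i, 0 ≤ p i) (hp1 : ∑ i, p i = 1)
    (μ L : ℝ) (hμ : 0 < μ) (hμL : μ ≤ L)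
    (F : Fin N → EuclideanSpace ℝ (Fin d) → ℝ)
    (gradF : Fin N → EuclideanSpace ℝ (Fin d) → EuclideanSpace ℝ (Fin d))
    (hstrong : ∀ i v w, μ/2 * ‖v - w‖^2 ≤ F i v - F i w - ⟪gradF i w, v - w⟫)
    (hsmooth : ∀ i v w, F i v - F i w - ⟪gradF i w, v - w⟫ ≤ L/2 * ‖v - w‖^2)
    (wstar : EuclideanSpace ℝ (Fin d))
    (hmin : ∀ v, (∑ i, p i * F i wstar) ≤ ∑ i, p i * F i v)
    (wistar : Fin N → EuclideanSpace ℝ (Fin d))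
    (hmini : ∀ i v, F i (wistar i) ≤ F i v)
    (Γ : ℝ) (hΓ : Γ = (∑ i, p i * F i wstar) - ∑ i, p i * F i (wistar i))
    (w : Fin N → EuclideanSpace ℝ (Fin d))
    (wbar : EuclideanSpace ℝ (Fin d)) (hwbar : wbar = ∑ i, p i • w i)
    (gbar : EuclideanSpace ℝ (Fin d)) (hgbar : gbar = ∑ i, p i • gradF i (w i))
    (η : ℝ) (hη0 : 0 < η) (hη : η ≤ 1/(4*L)) :
    ‖wbar - wstar‖^2 - 2*η*⟪wbar - wstar, gbar⟫ + η^2*‖gbar‖^2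
      ≤ (1 - η*μ) * ‖wbar - wstar‖^2 + 6*L*η^2*Γ
        + 2 * ∑ i, p i * ‖wbar - w i‖^2 := by
  have hL : 0 < L := lt_of_lt_of_le hμ hμL
  have hηL : 4 * (η * L) ≤ 1 := by
    have h4L : (0:ℝ) < 4 * L := by positivity
    have := (le_div_iff₀ h4L).mp hη
    linarith
  -- gradient norm bound via smoothness + minimality
  have gb : ∀ i v, ‖gradF i v‖^2 ≤ 2*L*(F i v - F i (wistar i)) := by
    intro i v
    have hLne : L ≠ 0 := ne_of_gt hL
    have hs := hsmooth i (v - (1/L) • gradF i v) v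
    have hm := hmini i (v - (1/L) • gradF i v)
    have e1 : v - (1/L) • gradF i v - v = -((1/L) • gradF i v) := by abel
    rw [e1, inner_neg_right, real_inner_smul_right, real_inner_self_eq_norm_sq,
        norm_neg, norm_smul, Real.norm_eq_abs, mul_pow, sq_abs] at hs
    have e2 : L/2 * ((1/L)^2 * ‖gradF i v‖^2) = 1/(2*L) * ‖gradF i v‖^2 := by
      field_simp
      try ring
    have e3 : (1/L) * ‖gradF i v‖^2 = 2 * (1/(2*L) * ‖gradF i v‖^2) := by
      field_simp
      try ring
    rw [e2, e3] at hs
    have h5 : 1/(2*L) * ‖gradF i v‖^2 ≤ F i v - F i (wistar i) := by linarith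
    have h6 := mul_le_mul_of_nonneg_left h5 (by positivity : (0:ℝ) ≤ 2*L)
    have e4 : 2*L*(1/(2*L) * ‖gradF i v‖^2) = ‖gradF i v‖^2 := by
      field_simp
      try ring
    rw [e4] at h6
    exact h6
  set x := wbar - wstar with hx
  set S := ∑ i, p i * F i (w i) with hS
  set Fs := ∑ i, p i * F i wstar with hFs
  set T := ∑ i, p i * F i (wistar i) with hT
  set B := ∑ i, p i * F i wbar with hB
  set W := ∑ i, p i * ‖wbar - w i‖^2 with hW
  set Q := ∑ i, p i * ‖gradF i (w i)‖^2 with hQ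
  set R := ∑ i, p i * ‖wstar - w i‖^2 with hR
  have hW0 : (0:ℝ) ≤ W := Finset.sum_nonneg fun i _ => mul_nonneg (hp0 i) (sq_nonneg _)
  have hQle : Q ≤ 2*L*(S - T) := by
    have h := Finset.sum_le_sum (fun i (_ : i ∈ Finset.univ) =>
      mul_le_mul_of_nonneg_left (gb i (w i)) (hp0 i))
    calc Q ≤ ∑ i, p i * (2*L*(F i (w i) - F i (wistar i))) := h
    _ = 2*L*(S - T) := by
        rw [hS, hT, ← Finset.sum_sub_distrib, Finset.mul_sum]
        exact Finset.sum_congr rfl fun i _ => by ring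
  have hgbarle : ‖gbar‖^2 ≤ Q := by
    rw [hgbar]; exact jensen_norm_sq p hp0 hp1 _
  have hxR : ‖x‖^2 ≤ R := by
    have e : ∑ i, p i • (wstar - w i) = wstar - wbar := by
      simp_rw [smul_sub]
      rw [Finset.sum_sub_distrib, ← Finset.sum_smul, hp1, one_smul, hwbar]
    have h := jensen_norm_sq p hp0 hp1 (fun i => wstar - w i)
    rw [e] at h
    calc ‖x‖^2 = ‖wstar - wbar‖^2 := by rw [hx, norm_sub_rev]
    _ ≤ R := h
  -- c5 : inner product bound
  have c5 : -(2*η)*⟪x, gbar⟫ ≤ W + η^2*Q + 2*η*(Fs - S) - η*μ*R := by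
    have e : ⟪x, gbar⟫ = ∑ i, p i * ⟪x, gradF i (w i)⟫ := by
      rw [hgbar, inner_sum]
      exact Finset.sum_congr rfl fun i _ => real_inner_smul_right _ _ _
    have per : ∀ i ∈ Finset.univ, p i * (-(2*η)*⟪x, gradF i (w i)⟫)
        ≤ p i * (‖wbar - w i‖^2 + η^2*‖gradF i (w i)‖^2
            + 2*η*(F i wstar - F i (w i)) - η*μ*‖wstar - w i‖^2) := by
      intro i _
      refine mul_le_mul_of_nonneg_left ?_ (hp0 i)
      have esplit : ⟪x, gradF i (w i)⟫
          = ⟪wbar - w i, gradF i (w i)⟫ + ⟪w i - wstar, gradF i (w i)⟫ := by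
        rw [hx, show wbar - wstar = (wbar - w i) + (w i - wstar) from by abel, inner_add_left]
      have y1 := young_aux (wbar - w i) (gradF i (w i)) η
      have hs := hstrong i wstar (w i)
      have hc2 : ⟪w i - wstar, gradF i (w i)⟫ = -⟪gradF i (w i), wstar - w i⟫ := by
        rw [real_inner_comm, show w i - wstar = -(wstar - w i) from by abel, inner_neg_right]
      rw [esplit, hc2]
      nlinarith [y1, mul_le_mul_of_nonneg_left
        (show ⟪gradF i (w i), wstar - w i⟫ ≤ F i wstar - F i (w i) - μ/2*‖wstar - w i‖^2
          from by linarith) (le_of_lt hη0)]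
    calc -(2*η)*⟪x, gbar⟫ = ∑ i, p i * (-(2*η)*⟪x, gradF i (w i)⟫) := by
          rw [e, Finset.mul_sum]; exact Finset.sum_congr rfl fun i _ => by ring
    _ ≤ _ := Finset.sum_le_sum per
    _ = W + η^2*Q + 2*η*(Fs - S) - η*μ*R := by
        simp only [hW, hQ, hFs, hS, hR, Finset.mul_sum, ← Finset.sum_sub_distrib,
          ← Finset.sum_add_distrib]
        exact Finset.sum_congr rfl fun i _ => by ring
  -- c8 : lower bound on S
  have c8 : 2*η*B - W - 2*L*η^2*(B - T) ≤ 2*η*S := by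
    have per : ∀ i ∈ Finset.univ,
        p i * (2*η*(F i wbar) - ‖wbar - w i‖^2 - 2*L*η^2*(F i wbar - F i (wistar i)))
        ≤ p i * (2*η*(F i (w i))) := by
      intro i _
      refine mul_le_mul_of_nonneg_left ?_ (hp0 i)
      have hs := hstrong i (w i) wbar
      have gb' := gb i wbar
      have h0 : (0:ℝ) ≤ μ/2 * ‖w i - wbar‖^2 := mul_nonneg (by linarith) (sq_nonneg _)
      have hs' : ⟪gradF i wbar, w i - wbar⟫ ≤ F i (w i) - F i wbar := by linarith
      have h1 : 2*η*⟪gradF i wbar, w i - wbar⟫ ≤ 2*η*(F i (w i) - F i wbar) :=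
        mul_le_mul_of_nonneg_left hs' (by positivity)
      have h2 : η^2*‖gradF i wbar‖^2 ≤ η^2*(2*L*(F i wbar - F i (wistar i))) :=
        mul_le_mul_of_nonneg_left gb' (sq_nonneg η)
      have y := young_aux (w i - wbar) (gradF i wbar) η
      have hcomm : ⟪w i - wbar, gradF i wbar⟫ = ⟪gradF i wbar, w i - wbar⟫ :=
        real_inner_comm _ _
      rw [hcomm] at y
      have hrev : ‖wbar - w i‖ = ‖w i - wbar‖ := norm_sub_rev _ _
      rw [hrev]
      linarith [y, h1, h2]
    have h := Finset.sum_le_sum per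
    calc 2*η*B - W - 2*L*η^2*(B - T)
        = ∑ i, p i * (2*η*(F i wbar) - ‖wbar - w i‖^2 - 2*L*η^2*(F i wbar - F i (wistar i))) := by
          simp only [hB, hW, hT, Finset.mul_sum, ← Finset.sum_sub_distrib,
            ← Finset.sum_add_distrib]
          exact Finset.sum_congr rfl fun i _ => by ring
    _ ≤ ∑ i, p i * (2*η*(F i (w i))) := h
    _ = 2*η*S := by rw [hS, Finset.mul_sum]; exact Finset.sum_congr rfl fun i _ => by ring
  have hBFs : Fs ≤ B := by rw [hB, hFs]; exact hmin wbar
  have hTFs : T ≤ Fs := by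
    rw [hT, hFs]
    exact Finset.sum_le_sum fun i _ => mul_le_mul_of_nonneg_left (hmini i wstar) (hp0 i)
  -- key combination
  have h2Lη : (0:ℝ) ≤ 1 - 2*L*η := by linarith
  have key : 4*L*η^2*(S - T) - 2*η*(S - Fs) ≤ 6*L*η^2*(Fs - T) + W := by
    nlinarith [mul_nonneg h2Lη
        (show (0:ℝ) ≤ 2*η*S - (2*η*B - W - 2*L*η^2*(B - T)) by linarith),
      mul_nonneg (show (0:ℝ) ≤ 2*η - 6*L*η^2 by
          nlinarith [mul_nonneg hη0.le (show (0:ℝ) ≤ 2 - 6*L*η by linarith)])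
        (show (0:ℝ) ≤ B - Fs by linarith),
      mul_nonneg (by positivity : (0:ℝ) ≤ 4*L^2*η^3) (show (0:ℝ) ≤ B - T by linarith),
      mul_nonneg (by positivity : (0:ℝ) ≤ 2*L*η) hW0]
  have k1 : η^2*‖gbar‖^2 ≤ η^2*Q := mul_le_mul_of_nonneg_left hgbarle (sq_nonneg η)
  have k2 : η^2*Q ≤ η^2*(2*L*(S - T)) := mul_le_mul_of_nonneg_left hQle (sq_nonneg η)
  have k4 : η*μ*‖x‖^2 ≤ η*μ*R := mul_le_mul_of_nonneg_left hxR (by positivity)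
  rw [hΓ]
  linarith [k1, k2, k4, c5, key, hW0]

set_option maxHeartbeats 1000000 in
/-- Lemma 3 (one-step SGD descent bound): with `F_i` `μ`-strongly convex and `L`-smooth,
`F = ∑ p_i F_i` minimized at `w*`, `Γ = F* − ∑ p_i F_i*`, `w̄ = ∑ p_i w_i`,
`ḡ = ∑ p_i ∇F_i(w_i)`, `E[g] = ḡ` and `0 < η ≤ 1/(4L)`:
`E‖(w̄ − η g) − w*‖² ≤ (1 − ημ)‖w̄ − w*‖² + η² E‖g − ḡ‖² + 6Lη²Γ + 2 ∑ p_i ‖w̄ − w_i‖²`. -/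
theorem one_step_sgd_bound {d N : ℕ}
    {Ω : Type*} [MeasurableSpace Ω] (P : Measure Ω) [IsProbabilityMeasure P]
    (p : Fin N → ℝ) (hp0 : ∀ i, 0 ≤ p i) (hp1 : ∑ i, p i = 1)
    (μ L : ℝ) (hμ : 0 < μ) (hμL : μ ≤ L)
    (F : Fin N → EuclideanSpace ℝ (Fin d) → ℝ)
    (gradF : Fin N → EuclideanSpace ℝ (Fin d) → EuclideanSpace ℝ (Fin d))
    (hgrad : ∀ i x, HasGradientAt (F i) (gradF i x) x)
    (hstrong : ∀ i v w, μ/2 * ‖v - w‖^2 ≤ F i v - F i w - ⟪gradF i w, v - w⟫)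
    (hsmooth : ∀ i v w, F i v - F i w - ⟪gradF i w, v - w⟫ ≤ L/2 * ‖v - w‖^2)
    (wstar : EuclideanSpace ℝ (Fin d))
    (hmin : ∀ v, (∑ i, p i * F i wstar) ≤ ∑ i, p i * F i v)
    (wistar : Fin N → EuclideanSpace ℝ (Fin d))
    (hmini : ∀ i v, F i (wistar i) ≤ F i v)
    (Γ : ℝ) (hΓ : Γ = (∑ i, p i * F i wstar) - ∑ i, p i * F i (wistar i))
    (w : Fin N → EuclideanSpace ℝ (Fin d))
    (wbar : EuclideanSpace ℝ (Fin d)) (hwbar : wbar = ∑ i, p i • w i)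
    (gbar : EuclideanSpace ℝ (Fin d)) (hgbar : gbar = ∑ i, p i • gradF i (w i))
    (g : Ω → EuclideanSpace ℝ (Fin d))
    (hgint : Integrable g P)
    (hg2int : Integrable (fun ω => ‖g ω - gbar‖^2) P)
    (hmean : ∫ ω, g ω ∂P = gbar)
    (η : ℝ) (hη0 : 0 < η) (hη : η ≤ 1/(4*L)) :
    ∫ ω, ‖(wbar - η • g ω) - wstar‖^2 ∂P
      ≤ (1 - η*μ) * ‖wbar - wstar‖^2 + η^2 * (∫ ω, ‖g ω - gbar‖^2 ∂P)
        + 6*L*η^2*Γ + 2 * ∑ i, p i * ‖wbar - w i‖^2 := by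
  set a := wbar - η • gbar - wstar with ha
  have hpoint : ∀ ω, ‖wbar - η • g ω - wstar‖^2
      = ‖a‖^2 - 2*η*⟪a, g ω - gbar⟫ + η^2*‖g ω - gbar‖^2 := by
    intro ω
    have hea : wbar - η • g ω - wstar = a - η • (g ω - gbar) := by
      rw [ha]; module
    rw [hea, norm_sub_sq_real, real_inner_smul_right, norm_smul, Real.norm_eq_abs,
      mul_pow, sq_abs]
    ring
  have hintg : Integrable (fun ω => g ω - gbar) P := hgint.sub (integrable_const _)
  have hI1 : Integrable (fun ω => ⟪a, g ω - gbar⟫) P := hintg.const_inner a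
  have hzero : ∫ ω, ⟪a, g ω - gbar⟫ ∂P = 0 := by
    rw [integral_inner hintg, integral_sub hgint (integrable_const _), hmean,
      integral_const]
    simp
  have hint : ∫ ω, ‖wbar - η • g ω - wstar‖^2 ∂P
      = ‖a‖^2 + η^2 * ∫ ω, ‖g ω - gbar‖^2 ∂P := by
    calc ∫ ω, ‖wbar - η • g ω - wstar‖^2 ∂P
        = ∫ ω, (‖a‖^2 - 2*η*⟪a, g ω - gbar⟫ + η^2*‖g ω - gbar‖^2) ∂P :=
          integral_congr_ae (Filter.Eventually.of_forall fun ω => hpoint ω)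
    _ = ‖a‖^2 + η^2 * ∫ ω, ‖g ω - gbar‖^2 ∂P := by
        have hC : Integrable (fun ω => 2*η*⟪a, g ω - gbar⟫) P := hI1.const_mul _
        have hA : Integrable (fun ω => ‖a‖^2 - 2*η*⟪a, g ω - gbar⟫) P :=
          (integrable_const _).sub hC
        have hB : Integrable (fun ω => η^2*‖g ω - gbar‖^2) P := hg2int.const_mul _
        rw [integral_add hA hB, integral_sub (integrable_const _) hC, integral_const,
          integral_const_mul, integral_const_mul, hzero]
        simp
  have hnorm : ‖a‖^2 = ‖wbar - wstar‖^2 - 2*η*⟪wbar - wstar, gbar⟫ + η^2*‖gbar‖^2 := by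
    have e2 : a = (wbar - wstar) - η • gbar := by rw [ha]; module
    rw [e2, norm_sub_sq_real, real_inner_smul_right, norm_smul, Real.norm_eq_abs,
      mul_pow, sq_abs]
    ring
  have det := det_bound p hp0 hp1 μ L hμ hμL F gradF hstrong hsmooth wstar hmin
    wistar hmini Γ hΓ w wbar hwbar gbar hgbar η hη0 hη
  rw [hint]
  linarith [det, hnorm]
end

section
/- Let E ≥ 1 be an integer, let t_0 ≤ t be integers with t − t_0 ≤ E − 1, and let (η_τ)_{τ ≥ 0} be a positive nonincreasing sequence with η_{t_0} ≤ 2η_t. Suppose that for each i ∈ {1, …, N} there are random vectors g_{t_0}^i, …, g_{t−1}^i in ℝ^d with E‖g_τ^i‖² ≤ G, and set w_t^i = w_{t_0} − Σ_{τ=t_0}^{t−1} η_τ g_τ^i for a common point w_{t_0} ∈ ℝ^d, and w̄_t = Σ_{i=1}^N p_i w_t^i. Then E[ Σ_{i=1}^N p_i ‖w̄_t − w_t^i‖² ] ≤ 4 η_t² (E − 1)² G. -/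
open MeasureTheory

/-- Lemma 5 (divergence of local models): after at most `E − 1` local SGD steps of
step sizes `η_τ` from a common point `w₀`, with `E‖g_τ^i‖² ≤ G`, `η` positive
nonincreasing and `η_{t₀} ≤ 2 η_t`:
`E[∑ p_i ‖w̄_t − w_t^i‖²] ≤ 4 η_t² (E − 1)² G`. -/
theorem local_model_divergence_bound {d N : ℕ}
    {Ω : Type*} [MeasurableSpace Ω] (P : Measure Ω) [IsProbabilityMeasure P]
    (p : Fin N → ℝ) (hp0 : ∀ i, 0 ≤ p i) (hp1 : ∑ i, p i = 1)
    (E : ℕ) (hE : 1 ≤ E) (t0 t : ℕ) (ht0 : t0 ≤ t) (htE : t - t0 ≤ E - 1)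
    (η : ℕ → ℝ) (hηpos : ∀ τ, 0 < η τ) (hηmono : Antitone η) (hη2 : η t0 ≤ 2 * η t)
    (G : ℝ) (hG : 0 ≤ G)
    (g : Fin N → ℕ → Ω → EuclideanSpace ℝ (Fin d))
    (hint2 : ∀ i, ∀ τ ∈ Finset.Ico t0 t, Integrable (fun ω => ‖g i τ ω‖^2) P)
    (hbound : ∀ i, ∀ τ ∈ Finset.Ico t0 t, ∫ ω, ‖g i τ ω‖^2 ∂P ≤ G)
    (w0 : EuclideanSpace ℝ (Fin d))
    (wt : Fin N → Ω → EuclideanSpace ℝ (Fin d))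
    (hw : ∀ i ω, wt i ω = w0 - ∑ τ ∈ Finset.Ico t0 t, η τ • g i τ ω) :
    ∫ ω, (∑ i, p i * ‖(∑ j, p j • wt j ω) - wt i ω‖^2) ∂P
      ≤ 4 * (η t)^2 * ((E : ℝ) - 1)^2 * G := by
  classical
  set S := Finset.Ico t0 t with hS
  set c : ℝ := (S.card : ℝ)
  have hc0 : 0 ≤ c := Nat.cast_nonneg _
  -- pointwise bound
  have key : ∀ ω, (∑ i, p i * ‖(∑ j, p j • wt j ω) - wt i ω‖^2)
      ≤ ∑ i, p i * (c * ∑ τ ∈ S, (η τ)^2 * ‖g i τ ω‖^2) := by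
    intro ω
    set v : Fin N → EuclideanSpace ℝ (Fin d) := fun i => ∑ τ ∈ S, η τ • g i τ ω with hv
    set m : EuclideanSpace ℝ (Fin d) := ∑ j, p j • v j with hm
    have hdiff : ∀ i, (∑ j, p j • wt j ω) - wt i ω = v i - m := by
      intro i
      have : (∑ j, p j • wt j ω) = w0 - m := by
        simp only [hw, smul_sub, Finset.sum_sub_distrib, ← Finset.sum_smul, hp1, one_smul, hm]
        rfl
      rw [this, hw i ω]
      abel
    -- step 1: ∑ p_i ‖v i - m‖² ≤ ∑ p_i ‖v i‖²
    have step1 : (∑ i, p i * ‖v i - m‖^2) ≤ ∑ i, p i * ‖v i‖^2 := by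
      have expand : ∀ i, ‖v i - m‖^2 = ‖v i‖^2 - 2 * inner ℝ (v i) m + ‖m‖^2 :=
        fun i => norm_sub_sq_real (v i) m
      have hinner : (∑ i, p i * inner ℝ (v i) m) = ‖m‖^2 := by
        rw [← real_inner_self_eq_norm_sq, hm, sum_inner]
        exact Finset.sum_congr rfl fun i _ => by rw [real_inner_smul_left]
      calc (∑ i, p i * ‖v i - m‖^2)
          = (∑ i, p i * ‖v i‖^2) - 2 * (∑ i, p i * inner ℝ (v i) m)
            + (∑ i, p i) * ‖m‖^2 := by
            simp only [expand]
            rw [Finset.sum_mul, Finset.mul_sum, ← Finset.sum_sub_distrib,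
              ← Finset.sum_add_distrib]
            exact Finset.sum_congr rfl fun i _ => by ring
        _ = (∑ i, p i * ‖v i‖^2) - ‖m‖^2 := by rw [hinner, hp1]; ring
        _ ≤ ∑ i, p i * ‖v i‖^2 := by
            have : (0:ℝ) ≤ ‖m‖^2 := sq_nonneg _
            linarith
    -- step 2: ‖v i‖² ≤ c * ∑ η² ‖g‖²
    have step2 : ∀ i, ‖v i‖^2 ≤ c * ∑ τ ∈ S, (η τ)^2 * ‖g i τ ω‖^2 := by
      intro i
      calc ‖v i‖^2 ≤ (∑ τ ∈ S, ‖η τ • g i τ ω‖)^2 := by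
            apply pow_le_pow_left₀ (norm_nonneg _) (norm_sum_le _ _)
        _ ≤ c * ∑ τ ∈ S, ‖η τ • g i τ ω‖^2 := sq_sum_le_card_mul_sum_sq
        _ = c * ∑ τ ∈ S, (η τ)^2 * ‖g i τ ω‖^2 := by
            congr 1; refine Finset.sum_congr rfl fun τ _ => ?_
            rw [norm_smul, mul_pow, Real.norm_eq_abs, sq_abs]
    calc (∑ i, p i * ‖(∑ j, p j • wt j ω) - wt i ω‖^2)
        = ∑ i, p i * ‖v i - m‖^2 := by
          exact Finset.sum_congr rfl fun i _ => by rw [hdiff i]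
      _ ≤ ∑ i, p i * ‖v i‖^2 := step1
      _ ≤ ∑ i, p i * (c * ∑ τ ∈ S, (η τ)^2 * ‖g i τ ω‖^2) :=
          Finset.sum_le_sum fun i _ => mul_le_mul_of_nonneg_left (step2 i) (hp0 i)
  -- integrability of RHS
  have hintR : Integrable (fun ω => ∑ i, p i * (c * ∑ τ ∈ S, (η τ)^2 * ‖g i τ ω‖^2)) P := by
    apply integrable_finset_sum
    intro i _
    apply Integrable.const_mul
    apply Integrable.const_mul
    exact integrable_finset_sum _ fun τ hτ => (hint2 i τ hτ).const_mul _
  have hmono : ∫ ω, (∑ i, p i * ‖(∑ j, p j • wt j ω) - wt i ω‖^2) ∂P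
      ≤ ∫ ω, (∑ i, p i * (c * ∑ τ ∈ S, (η τ)^2 * ‖g i τ ω‖^2)) ∂P := by
    apply integral_mono_of_nonneg
    · filter_upwards with ω
      exact Finset.sum_nonneg fun i _ => mul_nonneg (hp0 i) (sq_nonneg _)
    · exact hintR
    · filter_upwards with ω using key ω
  refine hmono.trans ?_
  rw [integral_finset_sum _ (fun i _ => ((integrable_finset_sum _ fun τ hτ =>
      (hint2 i τ hτ).const_mul _).const_mul _).const_mul _)]
  have hηle : ∀ τ ∈ S, (η τ)^2 ≤ (η t0)^2 := by
    intro τ hτ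
    have := hηmono (Finset.mem_Ico.1 hτ).1
    exact pow_le_pow_left₀ (hηpos τ).le this 2
  have hcE : c ≤ (E : ℝ) - 1 := by
    have : S.card = t - t0 := Nat.card_Ico t0 t
    have h1 : S.card ≤ E - 1 := by rw [this]; exact htE
    have : c ≤ ((E - 1 : ℕ) : ℝ) := Nat.cast_le.2 h1
    rwa [Nat.cast_sub hE, Nat.cast_one] at this
  have step : ∀ i, (∫ ω, p i * (c * ∑ τ ∈ S, (η τ)^2 * ‖g i τ ω‖^2) ∂P)
      ≤ p i * (c * (c * ((η t0)^2 * G))) := by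
    intro i
    rw [integral_const_mul, integral_const_mul,
      integral_finset_sum _ (fun τ hτ => (hint2 i τ hτ).const_mul _)]
    apply mul_le_mul_of_nonneg_left _ (hp0 i)
    apply mul_le_mul_of_nonneg_left _ hc0
    have : (∑ τ ∈ S, ∫ ω, (η τ)^2 * ‖g i τ ω‖^2 ∂P) ≤ ∑ τ ∈ S, (η t0)^2 * G := by
      apply Finset.sum_le_sum
      intro τ hτ
      rw [integral_const_mul]
      calc (η τ)^2 * ∫ ω, ‖g i τ ω‖^2 ∂P ≤ (η τ)^2 * G :=
            mul_le_mul_of_nonneg_left (hbound i τ hτ) (sq_nonneg _)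
        _ ≤ (η t0)^2 * G := mul_le_mul_of_nonneg_right (hηle τ hτ) hG
    refine this.trans ?_
    rw [Finset.sum_const, nsmul_eq_mul]
  calc (∑ i, ∫ ω, p i * (c * ∑ τ ∈ S, (η τ)^2 * ‖g i τ ω‖^2) ∂P)
      ≤ ∑ i, p i * (c * (c * ((η t0)^2 * G))) := Finset.sum_le_sum fun i _ => step i
    _ = c * c * (η t0)^2 * G := by rw [← Finset.sum_mul, hp1]; ring
    _ ≤ ((E:ℝ)-1) * ((E:ℝ)-1) * (2 * η t)^2 * G := by
        have hE1 : (0:ℝ) ≤ (E:ℝ) - 1 := by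
          have : (1:ℝ) ≤ (E:ℝ) := by exact_mod_cast hE
          linarith
        have hη0 : (0:ℝ) ≤ η t0 := (hηpos t0).le
        have h2 : (η t0)^2 ≤ (2 * η t)^2 := pow_le_pow_left₀ hη0 hη2 2
        have hcc : c * c ≤ ((E:ℝ)-1) * ((E:ℝ)-1) := mul_le_mul hcE hcE hc0 hE1
        apply mul_le_mul_of_nonneg_right _ hG
        calc c * c * (η t0)^2 ≤ ((E:ℝ)-1) * ((E:ℝ)-1) * (η t0)^2 :=
              mul_le_mul_of_nonneg_right hcc (sq_nonneg _)
          _ ≤ ((E:ℝ)-1) * ((E:ℝ)-1) * (2*η t)^2 :=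
              mul_le_mul_of_nonneg_left h2 (mul_nonneg hE1 hE1)
    _ = 4 * (η t)^2 * ((E : ℝ) - 1)^2 * G := by ring
end

section
/- Let S be a finite index set of size M, and for each i ∈ S let m_i ≥ 1 be an integer, let w_i^α and w_i^{β_n} (n = 1, …, m_i) be vectors in ℝ^d, let a_{i,n} be real weights, and let ε be a real number. Set w̄ = (1/M)·Σ_{j∈S} w_j^α and define the updated submodels by w_i^{α′} = w_i^α + ε(w̄ − w_i^α) + Σ_{n=1}^{m_i} a_{i,n}(w_i^{β_n} − w_i^α) and w_i^{β_n′} = w_i^{β_n} + a_{i,n}(w_i^α − w_i^{β_n}). Then Σ_{i∈S} ( w_i^{α′} + Σ_{n=1}^{m_i} w_i^{β_n′} ) = Σ_{i∈S} ( w_i^α + Σ_{n=1}^{m_i} w_i^{β_n} ), i.e., the total sum of all visible and invisible submodels is invariant under one round of the model-splitting update. -/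
/-- Conservation of the total sum of visible and invisible submodels under one round
of the MSP-FL model-splitting update (one visible submodel `wα i` and `m i ≥ 1`
invisible submodels `wβ i n` per client `i` in the selected set `S` of size `M`). -/
theorem mspfl_sum_invariant {d : ℕ} {ι : Type*} (S : Finset ι) (M : ℕ)
    (hcard : S.card = M) (hM : 0 < M)
    (m : ι → ℕ) (hm : ∀ i ∈ S, 1 ≤ m i)
    (wα : ι → EuclideanSpace ℝ (Fin d))
    (wβ : ι → ℕ → EuclideanSpace ℝ (Fin d))
    (a : ι → ℕ → ℝ) (ε : ℝ) :
    ∑ i ∈ S,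
        ((wα i + ε • ((M : ℝ)⁻¹ • ∑ j ∈ S, wα j - wα i)
            + ∑ n ∈ Finset.range (m i), a i n • (wβ i n - wα i))
          + ∑ n ∈ Finset.range (m i), (wβ i n + a i n • (wα i - wβ i n)))
      = ∑ i ∈ S, (wα i + ∑ n ∈ Finset.range (m i), wβ i n) := by
  have hM' : (M : ℝ) ≠ 0 := Nat.cast_ne_zero.mpr hM.ne'
  have h1 : ∀ i ∈ S,
      ((wα i + ε • ((M : ℝ)⁻¹ • ∑ j ∈ S, wα j - wα i)
          + ∑ n ∈ Finset.range (m i), a i n • (wβ i n - wα i))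
        + ∑ n ∈ Finset.range (m i), (wβ i n + a i n • (wα i - wβ i n)))
      = (wα i + ε • ((M : ℝ)⁻¹ • ∑ j ∈ S, wα j - wα i))
        + ∑ n ∈ Finset.range (m i), wβ i n := by
    intro i _
    rw [Finset.sum_add_distrib]
    simp only [smul_sub]
    rw [Finset.sum_sub_distrib, Finset.sum_sub_distrib]
    abel
  rw [Finset.sum_congr rfl h1, Finset.sum_add_distrib, Finset.sum_add_distrib,
    Finset.sum_add_distrib]
  congr 1
  rw [add_eq_left, ← Finset.smul_sum, Finset.sum_sub_distrib,
    Finset.sum_const, hcard, ← Nat.cast_smul_eq_nsmul ℝ, smul_smul, mul_inv_cancel₀ hM', one_smul,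
    sub_self, smul_zero]
end

section
/- Let μ > 0, ρ > 1/μ, θ > 0 with ρμ ≤ θ, and D ≥ 0. Let (a_t)_{t≥0} be a sequence of nonnegative reals satisfying a_{t+1} ≤ (1 − η_t μ)·a_t + η_t²·D for all t ≥ 0, where η_t = ρ/(θ + t). Then for every t ≥ 0, a_t ≤ ν/(θ + t), where ν = max{ ρ²D/(ρμ − 1), (θ + 1)·a_0 }. -/
/-- The contraction-to-`O(1/t)` induction lemma underlying Theorems 2 and 3:
if `a_{t+1} ≤ (1 - η_t μ) a_t + η_t² D` with `η_t = ρ/(θ + t)`, then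
`a_t ≤ ν/(θ + t)` with `ν = max (ρ²D/(ρμ − 1)) ((θ+1) a₀)`. -/
theorem contraction_recursion_bound (μ ρ θ D : ℝ)
    (hμ : 0 < μ) (hρ : 1/μ < ρ) (hθ : 0 < θ) (hρμ : ρ * μ ≤ θ) (hD : 0 ≤ D)
    (a : ℕ → ℝ) (ha : ∀ t, 0 ≤ a t)
    (hrec : ∀ t : ℕ, a (t+1) ≤ (1 - (ρ/(θ + (t : ℝ))) * μ) * a t + (ρ/(θ + (t : ℝ)))^2 * D) :
    ∀ t : ℕ, a t ≤ max (ρ^2 * D / (ρ*μ - 1)) ((θ + 1) * a 0) / (θ + (t : ℝ)) := by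
  set ν := max (ρ^2 * D / (ρ*μ - 1)) ((θ + 1) * a 0) with hνdef
  have hρμ1 : 1 < ρ * μ := by
    rw [div_lt_iff₀ hμ] at hρ; linarith
  have hν1 : ρ^2 * D ≤ (ρ*μ - 1) * ν := by
    have h := le_max_left (ρ^2 * D / (ρ*μ - 1)) ((θ + 1) * a 0)
    rw [div_le_iff₀ (by linarith)] at h
    linarith [h]
  have hν0 : 0 ≤ ν :=
    le_trans (div_nonneg (by positivity) (by linarith)) (le_max_left _ _)
  intro t
  induction t with
  | zero =>
    simp only [Nat.cast_zero, add_zero]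
    rw [le_div_iff₀ hθ]
    have h := le_max_right (ρ^2 * D / (ρ*μ - 1)) ((θ + 1) * a 0)
    nlinarith [ha 0]
  | succ t ih =>
    have hT : (0:ℝ) < θ + t := by positivity
    have hTμ : ρ * μ ≤ θ + t := by
      have : (0:ℝ) ≤ t := Nat.cast_nonneg t
      linarith
    have hcoef : 0 ≤ 1 - (ρ/(θ + (t:ℝ))) * μ := by
      rw [div_mul_eq_mul_div, sub_nonneg, div_le_one hT]
      exact hTμ
    have step : a (t+1) ≤ (1 - (ρ/(θ + (t:ℝ))) * μ) * (ν / (θ + t)) + (ρ/(θ + (t:ℝ)))^2 * D := by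
      calc a (t+1) ≤ (1 - (ρ/(θ + (t:ℝ))) * μ) * a t + (ρ/(θ + (t:ℝ)))^2 * D := hrec t
        _ ≤ _ := by
          have := mul_le_mul_of_nonneg_left ih hcoef
          linarith
    have heq : (1 - (ρ/(θ + (t:ℝ))) * μ) * (ν / (θ + t)) + (ρ/(θ + (t:ℝ)))^2 * D
        = (((θ + t) - ρ*μ)*ν + ρ^2*D) / (θ + t)^2 := by
      field_simp
    have hfin : (((θ + t) - ρ*μ)*ν + ρ^2*D) / (θ + t)^2 ≤ ν / (θ + (t:ℝ) + 1) := by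
      rw [div_le_div_iff₀ (by positivity) (by linarith)]
      nlinarith [hν1, hν0, hTμ]
    push_cast
    calc a (t+1) ≤ _ := step
      _ = _ := heq
      _ ≤ ν / (θ + (t:ℝ) + 1) := hfin
      _ = ν / (θ + ((t:ℝ) + 1)) := by ring_nf
end

section
/- Let 0 < μ ≤ L, let E ≥ 1 be an integer, let D ≥ 0, set θ = max{8L/μ, E} − 1 and η_t = 2/(μ(θ + t)). Let F : ℝ^d → ℝ be L-smooth with global minimizer w* and minimum value F*, and let (x_t)_{t≥0} be points in ℝ^d whose squared distances a_t = ‖x_t − w*‖² satisfy a_{t+1} ≤ (1 − η_t μ)·a_t + η_t²·D for all t ≥ 0. Then for every t ≥ 0, F(x_t) − F* ≤ (8L/(μ(θ + t)))·( 2D/μ + ((8L + μE)/2)·a_0 ). -/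
open scoped RealInnerProductSpace

set_option maxHeartbeats 1000000 in
/-- The quantitative `O(1/t)` convergence conclusion of Theorem 2 (and Theorem 3):
with `θ = max(8L/μ, E) − 1`, `η_t = 2/(μ(θ + t))`, `F` `L`-smooth with minimizer `w*`,
and iterates whose squared distances `a_t = ‖x_t − w*‖²` satisfy the descent recursion
`a_{t+1} ≤ (1 − η_t μ) a_t + η_t² D`, one has
`F(x_t) − F* ≤ (8L/(μ(θ+t))) (2D/μ + ((8L + μE)/2) a₀)`. -/
theorem convergence_rate_bound {d : ℕ}
    (μ L D : ℝ) (E : ℕ) (hμ : 0 < μ) (hμL : μ ≤ L) (hE : 1 ≤ E) (hD : 0 ≤ D)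
    (θ : ℝ) (hθ : θ = max (8*L/μ) (E : ℝ) - 1)
    (η : ℕ → ℝ) (hη : ∀ t : ℕ, η t = 2/(μ*(θ + (t : ℝ))))
    (F : EuclideanSpace ℝ (Fin d) → ℝ)
    (gradF : EuclideanSpace ℝ (Fin d) → EuclideanSpace ℝ (Fin d))
    (hgrad : ∀ x, HasGradientAt F (gradF x) x)
    (hsmooth : ∀ v w, F v - F w - ⟪gradF w, v - w⟫ ≤ L/2 * ‖v - w‖^2)
    (wstar : EuclideanSpace ℝ (Fin d)) (hmin : ∀ v, F wstar ≤ F v)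
    (x : ℕ → EuclideanSpace ℝ (Fin d))
    (hrec : ∀ t : ℕ, ‖x (t+1) - wstar‖^2
      ≤ (1 - η t * μ) * ‖x t - wstar‖^2 + (η t)^2 * D) :
    ∀ t : ℕ, F (x t) - F wstar
      ≤ (8*L/(μ*(θ + (t : ℝ))))
          * (2*D/μ + ((8*L + μ*(E : ℝ))/2) * ‖x 0 - wstar‖^2) := by
  have hL : 0 < L := lt_of_lt_of_le hμ hμL
  -- θ ≥ 7
  have h8 : (8:ℝ) ≤ 8*L/μ := by
    rw [le_div_iff₀ hμ]; nlinarith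
  have hθ7 : (7:ℝ) ≤ θ := by
    rw [hθ]; have := le_max_left (8*L/μ) (E:ℝ); linarith
  -- gradient at minimizer is zero
  have hg0 : gradF wstar = 0 := by
    have h := IsLocalMin.hasFDerivAt_eq_zero
      (IsMinOn.isLocalMin (fun v _ => hmin v) (Filter.univ_mem))
      (hgrad wstar).hasFDerivAt
    have := congrArg (InnerProductSpace.toDual ℝ (EuclideanSpace ℝ (Fin d))).symm h
    simpa using this
  have hsm : ∀ v, F v - F wstar ≤ L/2 * ‖v - wstar‖^2 := by
    intro v
    have := hsmooth v wstar
    rw [hg0] at this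
    simpa using this
  -- key induction
  obtain ⟨a, ha⟩ : ∃ a : ℕ → ℝ, a = fun t => ‖x t - wstar‖^2 := ⟨_, rfl⟩
  have ha0 : ∀ t, 0 ≤ a t := by intro t; rw [ha]; positivity
  obtain ⟨v, hv⟩ : ∃ v : ℝ, v = 4*D/μ^2 + (θ+1) * a 0 := ⟨_, rfl⟩
  have hvD : 4*D/μ^2 ≤ v := by
    have : 0 ≤ (θ+1) * a 0 := mul_nonneg (by linarith) (ha0 0)
    linarith
  have hvnn : 0 ≤ v := le_trans (by positivity) hvD
  have key : ∀ t : ℕ, a t ≤ v / (θ + t) := by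
    intro t
    induction t with
    | zero =>
      simp only [Nat.cast_zero, add_zero]
      rw [le_div_iff₀ (by linarith)]
      have h1 : 0 ≤ 4*D/μ^2 := by positivity
      have h2 : θ * a 0 ≤ (θ+1) * a 0 := by nlinarith [ha0 0]
      calc a 0 * θ = θ * a 0 := by ring
        _ ≤ (θ+1) * a 0 := h2
        _ ≤ v := by rw [hv]; linarith
    | succ n ih =>
      have hs : (7:ℝ) ≤ θ + n := by
        have : (0:ℝ) ≤ n := Nat.cast_nonneg n
        linarith
      have hspos : (0:ℝ) < θ + n := by linarith
      have hrecn := hrec n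
      rw [hη n] at hrecn
      have hcoef : 1 - 2/(μ*(θ+n)) * μ = ((θ+n) - 2)/(θ+n) := by
        field_simp
      have hsq : (2/(μ*(θ+n)))^2 * D = 4*D/(μ^2*(θ+n)^2) := by
        field_simp; ring
      have h1 : a (n+1) ≤ ((θ+n) - 2)/(θ+n) * a n + 4*D/(μ^2*(θ+n)^2) := by
        calc a (n+1) ≤ (1 - 2/(μ*(θ+n)) * μ) * a n + (2/(μ*(θ+n)))^2 * D := by
              simpa [ha] using hrecn
          _ = ((θ+n) - 2)/(θ+n) * a n + 4*D/(μ^2*(θ+n)^2) := by rw [hcoef, hsq]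
      have h2 : ((θ+n) - 2)/(θ+n) * a n ≤ ((θ+n) - 2)/(θ+n) * (v/(θ+n)) := by
        apply mul_le_mul_of_nonneg_left ih
        apply div_nonneg (by linarith) (by linarith)
      have h3 : ((θ+n) - 2)/(θ+n) * (v/(θ+n)) + 4*D/(μ^2*(θ+n)^2) ≤ v/(θ+(n+1)) := by
        have e : ((θ+n) - 2)/(θ+n) * (v/(θ+n)) + 4*D/(μ^2*(θ+n)^2)
            = (((θ+n)-2)*v + 4*D/μ^2)/((θ+n)^2) := by
          field_simp
        rw [e, div_le_div_iff₀ (by positivity) (by linarith)]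
        have k1 : 4*D/μ^2 * ((θ+n)+1) ≤ v * ((θ+n)+1) :=
          mul_le_mul_of_nonneg_right hvD (by linarith)
        have k2 : v * ((θ+n)+1) ≤ v * ((θ+n)+2) := by nlinarith
        nlinarith [k1, k2, hvnn, hs]
      push_cast
      calc a (n+1) ≤ ((θ+n) - 2)/(θ+n) * a n + 4*D/(μ^2*(θ+n)^2) := h1
        _ ≤ ((θ+n) - 2)/(θ+n) * (v/(θ+n)) + 4*D/(μ^2*(θ+n)^2) := by linarith
        _ ≤ v/(θ+(n+1)) := h3
  intro t
  have hs : (7:ℝ) ≤ θ + t := by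
    have : (0:ℝ) ≤ t := Nat.cast_nonneg t
    linarith
  have hspos : (0:ℝ) < θ + t := by linarith
  have step1 : F (x t) - F wstar ≤ L/2 * (v/(θ+t)) := by
    calc F (x t) - F wstar ≤ L/2 * a t := by rw [ha]; exact hsm (x t)
      _ ≤ L/2 * (v/(θ+t)) := by
        apply mul_le_mul_of_nonneg_left (key t) (by linarith)
  refine le_trans step1 ?_
  have hθ1 : μ*(θ+1) ≤ 8*L + μ*(E:ℝ) := by
    have hmax : θ + 1 ≤ 8*L/μ + (E:ℝ) := by
      rw [hθ]
      have h1 : (0:ℝ) ≤ 8*L/μ := by positivity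
      have h2 : (0:ℝ) ≤ (E:ℝ) := Nat.cast_nonneg E
      rcases max_cases (8*L/μ) (E:ℝ) with ⟨h,_⟩|⟨h,_⟩ <;> rw [h] <;> linarith
    have h8L : μ * (8*L/μ) = 8*L := by field_simp
    nlinarith
  have hqe : D/μ * μ = D := by field_simp
  have hq0 : 0 ≤ D/μ := by positivity
  have hmain : v*μ ≤ 16*(2*D/μ + ((8*L+μ*(E:ℝ))/2)*(a 0)) := by
    have h1 : 4*D/μ^2 * μ = 4*(D/μ) := by field_simp
    have h2 : μ*(θ+1)*(a 0) ≤ (8*L + μ*(E:ℝ))*(a 0) :=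
      mul_le_mul_of_nonneg_right hθ1 (ha0 0)
    have h3 : (0:ℝ) ≤ (8*L + μ*(E:ℝ))*(a 0) := by
      have : (0:ℝ) ≤ 8*L + μ*(E:ℝ) := by positivity
      exact mul_nonneg this (ha0 0)
    have hexp : v*μ = 4*(D/μ) + μ*(θ+1)*(a 0) := by
      rw [hv]; field_simp
    have hr : 16*(2*D/μ + ((8*L+μ*(E:ℝ))/2)*(a 0))
        = 32*(D/μ) + 8*((8*L + μ*(E:ℝ))*(a 0)) := by ring
    linarith [h2, h3, hq0, hexp, hr]
  obtain ⟨C, hC⟩ : ∃ C : ℝ, C = 2*D/μ + ((8*L + μ*(E:ℝ))/2) * (a 0) := ⟨_, rfl⟩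
  have hfin : L*v*μ ≤ 16*L*C := by
    have := mul_le_mul_of_nonneg_left hmain (le_of_lt hL)
    calc L*v*μ = L*(v*μ) := by ring
      _ ≤ L*(16*C) := by rw [hC]; exact this
      _ = 16*L*C := by ring
  have e1 : L/2 * (v/(θ+t)) = (L*v/2)/(θ+t) := by ring
  have e2 : 8*L/(μ*(θ+t)) * (2*D/μ + ((8*L + μ*(E:ℝ))/2) * ‖x 0 - wstar‖^2)
      = (8*L*C)/(μ*(θ+t)) := by
    rw [hC, ha]; ring
  rw [e1, e2, div_le_div_iff₀ (by linarith) (by positivity)]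
  have hhalf : (0:ℝ) ≤ (θ+t)/2 := by linarith
  calc L*v/2*(μ*(θ+t)) = (L*v*μ)*((θ+t)/2) := by ring
    _ ≤ (16*L*C)*((θ+t)/2) := mul_le_mul_of_nonneg_right hfin hhalf
    _ = 8*L*C*(θ+t) := by ring
end

section
/- Let M ≥ 2, d ≥ 1, ε ∈ (0, M/(M−1)), Θ = I − (1/M)·𝟙𝟙ᵀ ∈ ℝ^{M×M}, and λ = |1 − ε| (so 0 ≤ λ < 1). Let (W^α[k])_{k≥0}, (W^β[k])_{k≥0}, (Δ[k])_{k≥0} be sequences of M × d real matrices, set Q[k] = W^α[k] + Δ[k] and let q̄[k] ∈ ℝ^d be the average of the rows of Q[k]. Let A[k] be diagonal M × M matrices with nonnegative diagonal entries all at most a_max[k]. Suppose the rows of W^α[0] are all equal, and for every k and every row index i the dynamics w_i^α[k+1] = w_i^α[k] + ε(q̄[k] − q_i[k]) + a_i[k]·(w_i^β[k] − w_i^α[k]) hold, where w_i^α, w_i^β, q_i denote the i-th rows and a_i[k] the i-th diagonal entry of A[k]. Then for every k ≥ 0, ‖Θ·W^α[k+1]‖_F ≤ 2·Σ_{l=0}^{k}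 λ^{k−l}·‖Δ[l]‖_F + W̃·Σ_{l=0}^{k} λ^{k−l}·a_max[l], where W̃ = max_{0 ≤ l ≤ k} ‖W^β[l] − W^α[l]‖_F. -/
/-- Frobenius norm of an `M × d` matrix given by its rows in `ℝ^d`. -/
noncomputable def frob {M d : ℕ} (W : Fin M → EuclideanSpace ℝ (Fin d)) : ℝ :=
  Real.sqrt (∑ i, ‖W i‖^2)

open scoped RealInnerProductSpace

section aux

variable {M d : ℕ}

lemma frob_eq_norm (W : Fin M → EuclideanSpace ℝ (Fin d)) :
    frob W = ‖(WithLp.equiv 2 (Fin M → EuclideanSpace ℝ (Fin d))).symm W‖ := by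
  rw [PiLp.norm_eq_of_L2]; rfl

lemma frob_nonneg (W : Fin M → EuclideanSpace ℝ (Fin d)) : 0 ≤ frob W :=
  Real.sqrt_nonneg _

lemma frob_add_le (W V : Fin M → EuclideanSpace ℝ (Fin d)) :
    frob (fun i => W i + V i) ≤ frob W + frob V := by
  rw [frob_eq_norm, frob_eq_norm, frob_eq_norm]
  exact norm_add_le ((WithLp.equiv 2 _).symm W) ((WithLp.equiv 2 _).symm V)

lemma frob_smul (c : ℝ) (W : Fin M → EuclideanSpace ℝ (Fin d)) :
    frob (fun i => c • W i) = |c| * frob W := by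
  rw [frob_eq_norm, frob_eq_norm]
  have : (WithLp.equiv 2 (Fin M → EuclideanSpace ℝ (Fin d))).symm (fun i => c • W i)
      = c • (WithLp.equiv 2 (Fin M → EuclideanSpace ℝ (Fin d))).symm W := rfl
  rw [this, norm_smul, Real.norm_eq_abs]

lemma frob_center_le (hM : 0 < M) (W : Fin M → EuclideanSpace ℝ (Fin d)) :
    frob (fun i => W i - (M : ℝ)⁻¹ • ∑ j, W j) ≤ frob W := by
  set m : EuclideanSpace ℝ (Fin d) := (M : ℝ)⁻¹ • ∑ j, W j with hm
  set X : PiLp 2 (fun _ : Fin M => EuclideanSpace ℝ (Fin d)) :=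
    (WithLp.equiv 2 _).symm W with hX
  set Y : PiLp 2 (fun _ : Fin M => EuclideanSpace ℝ (Fin d)) :=
    (WithLp.equiv 2 _).symm (fun _ => m) with hY
  have hMne : (M : ℝ) ≠ 0 := by positivity
  have horth : ⟪X - Y, Y⟫ = 0 := by
    rw [PiLp.inner_apply]
    have : ∀ i : Fin M, ⟪(X - Y) i, Y i⟫ = ⟪W i, m⟫ - ⟪m, m⟫ := by
      intro i
      simp [X, Y, inner_sub_left]
    rw [Finset.sum_congr rfl fun i _ => this i, Finset.sum_sub_distrib,
      Finset.sum_const, ← sum_inner]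
    have hsum : ∑ j, W j = (M : ℝ) • m := by
      rw [hm, smul_smul, mul_inv_cancel₀ hMne, one_smul]
    rw [hsum, real_inner_smul_left]
    simp [Finset.card_univ, mul_comm]
  have hdecomp : ‖X‖ ^ 2 = ‖X - Y‖ ^ 2 + ‖Y‖ ^ 2 := by
    have := norm_add_sq_real (X - Y) Y
    rw [sub_add_cancel] at this
    rw [this, horth]; ring
  have hle : ‖X - Y‖ ^ 2 ≤ ‖X‖ ^ 2 := by nlinarith [sq_nonneg ‖Y‖]
  have h2 : ‖X - Y‖ ≤ ‖X‖ := by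
    nlinarith [norm_nonneg (X - Y), norm_nonneg X]
  calc frob (fun i => W i - (M : ℝ)⁻¹ • ∑ j, W j)
      = ‖X - Y‖ := by rw [frob_eq_norm]; rfl
    _ ≤ ‖X‖ := h2
    _ = frob W := (frob_eq_norm W).symm

lemma frob_diag_le (amx : ℝ) (hamx : 0 ≤ amx) (a : Fin M → ℝ)
    (ha : ∀ i, |a i| ≤ amx) (v : Fin M → EuclideanSpace ℝ (Fin d)) :
    frob (fun i => a i • v i) ≤ amx * frob v := by
  unfold frob
  have h1 : ∑ i, ‖a i • v i‖ ^ 2 ≤ ∑ i, amx ^ 2 * ‖v i‖ ^ 2 := by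
    apply Finset.sum_le_sum
    intro i _
    rw [norm_smul, Real.norm_eq_abs, mul_pow]
    have := ha i
    have h2 : |a i| ^ 2 ≤ amx ^ 2 := by nlinarith [abs_nonneg (a i)]
    nlinarith [sq_nonneg ‖v i‖, norm_nonneg (v i)]
  calc Real.sqrt (∑ i, ‖a i • v i‖ ^ 2) ≤ Real.sqrt (∑ i, amx ^ 2 * ‖v i‖ ^ 2) :=
        Real.sqrt_le_sqrt h1
    _ = amx * Real.sqrt (∑ i, ‖v i‖ ^ 2) := by
        rw [← Finset.mul_sum, Real.sqrt_mul (sq_nonneg amx), Real.sqrt_sq hamx]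

lemma frob_zero_of (W : Fin M → EuclideanSpace ℝ (Fin d)) (h : ∀ i, W i = 0) :
    frob W = 0 := by
  unfold frob
  simp [h]

end aux

/-- Lemma 9 (consensus deviation bound for MSPDQ-FL): with `Θ = I − (1/M)𝟙𝟙ᵀ`,
`λ = |1 − ε|`, quantized values `Q[k] = W^α[k] + Δ[k]` with row average `q̄[k]`,
and the dynamics `wᵢ^α[k+1] = wᵢ^α[k] + ε (q̄[k] − qᵢ[k]) + aᵢ[k](wᵢ^β[k] − wᵢ^α[k])`,
the deviation of the visible submodels from their average satisfies
`‖Θ W^α[k+1]‖_F ≤ 2 ∑ λ^{k−l} ‖Δ[l]‖_F + W̃ ∑ λ^{k−l} a_max[l]`. -/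
theorem consensus_deviation_bound {M d : ℕ} (hM : 2 ≤ M) (hd : 1 ≤ d)
    (ε : ℝ) (hε0 : 0 < ε) (hε1 : ε < (M : ℝ)/((M : ℝ) - 1))
    (Wα Wβ Δ : ℕ → Fin M → EuclideanSpace ℝ (Fin d))
    (a : ℕ → Fin M → ℝ) (amax : ℕ → ℝ)
    (ha0 : ∀ k i, 0 ≤ a k i) (ha1 : ∀ k i, a k i ≤ amax k)
    (h0 : ∀ i j, Wα 0 i = Wα 0 j)
    (hdyn : ∀ k i, Wα (k+1) i
      = Wα k i
        + ε • ((M : ℝ)⁻¹ • (∑ j, (Wα k j + Δ k j)) - (Wα k i + Δ k i))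
        + a k i • (Wβ k i - Wα k i)) :
    ∀ k : ℕ,
      frob (fun i => Wα (k+1) i - (M : ℝ)⁻¹ • ∑ j, Wα (k+1) j)
        ≤ 2 * ∑ l ∈ Finset.range (k+1), |1 - ε| ^ (k - l) * frob (Δ l)
          + ((Finset.range (k+1)).sup' Finset.nonempty_range_add_one
                (fun l => frob (fun i => Wβ l i - Wα l i)))
            * ∑ l ∈ Finset.range (k+1), |1 - ε| ^ (k - l) * amax l := by
  have hM0 : 0 < M := by omega
  have hM2 : (2:ℝ) ≤ (M:ℝ) := by exact_mod_cast hM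
  have hMne : (M : ℝ) ≠ 0 := by positivity
  set lam := |1 - ε| with hlamdef
  have hlam0 : 0 ≤ lam := abs_nonneg _
  have hε2 : ε ≤ 2 := by
    have h1 : (0:ℝ) < (M:ℝ) - 1 := by linarith
    have h2 : (M:ℝ)/((M:ℝ)-1) ≤ 2 := by
      rw [div_le_iff₀ h1]; linarith
    linarith
  set v : ℕ → Fin M → EuclideanSpace ℝ (Fin d) := fun k i => Wβ k i - Wα k i with hv
  set D : ℕ → Fin M → EuclideanSpace ℝ (Fin d) :=
    fun k i => Wα k i - (M : ℝ)⁻¹ • ∑ j, Wα k j with hDdef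
  have i0 : Fin M := ⟨0, hM0⟩
  have hamax : ∀ k, 0 ≤ amax k := fun k => le_trans (ha0 k i0) (ha1 k i0)
  -- one-step bound
  have hstep : ∀ k, frob (D (k+1))
      ≤ lam * frob (D k) + 2 * frob (Δ k) + amax k * frob (v k) := by
    intro k
    set u : Fin M → EuclideanSpace ℝ (Fin d) := fun i => a k i • (v k i) with hu
    have hsum : ∑ j, Wα (k+1) j = (∑ j, Wα k j) + ∑ j, u j := by
      have hc : ∑ _j : Fin M, ((M:ℝ)⁻¹ • ∑ j', (Wα k j' + Δ k j'))
          = ∑ j', (Wα k j' + Δ k j') := by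
        rw [Finset.sum_const, Finset.card_univ, Fintype.card_fin,
          ← Nat.cast_smul_eq_nsmul ℝ, smul_smul, mul_inv_cancel₀ hMne, one_smul]
      simp only [hdyn k]
      rw [Finset.sum_add_distrib, Finset.sum_add_distrib, ← Finset.smul_sum,
        Finset.sum_sub_distrib, hc]
      simp
      rfl
    have hDid : ∀ i, D (k+1) i
        = (1-ε) • D k i
          + ((-ε) • (Δ k i - (M:ℝ)⁻¹ • ∑ j, Δ k j)
            + (u i - (M:ℝ)⁻¹ • ∑ j, u j)) := by
      intro i
      simp only [hDdef]
      rw [hdyn k i, hsum, Finset.sum_add_distrib]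
      module
    have h1 : frob (D (k+1))
        ≤ frob (fun i => (1-ε) • D k i)
          + frob (fun i => (-ε) • (Δ k i - (M:ℝ)⁻¹ • ∑ j, Δ k j)
            + (u i - (M:ℝ)⁻¹ • ∑ j, u j)) := by
      have : D (k+1) = fun i => (1-ε) • D k i
          + ((-ε) • (Δ k i - (M:ℝ)⁻¹ • ∑ j, Δ k j)
            + (u i - (M:ℝ)⁻¹ • ∑ j, u j)) := funext hDid
      rw [this]
      exact frob_add_le _ _
    have h2 : frob (fun i => (-ε) • (Δ k i - (M:ℝ)⁻¹ • ∑ j, Δ k j)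
            + (u i - (M:ℝ)⁻¹ • ∑ j, u j))
        ≤ frob (fun i => (-ε) • (Δ k i - (M:ℝ)⁻¹ • ∑ j, Δ k j))
          + frob (fun i => u i - (M:ℝ)⁻¹ • ∑ j, u j) := frob_add_le _ _
    have h3 : frob (fun i => (1-ε) • D k i) = lam * frob (D k) := frob_smul _ _
    have h4 : frob (fun i => (-ε) • (Δ k i - (M:ℝ)⁻¹ • ∑ j, Δ k j))
        = ε * frob (fun i => Δ k i - (M:ℝ)⁻¹ • ∑ j, Δ k j) := by
      rw [frob_smul, abs_neg, abs_of_pos hε0]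
    have h5 : frob (fun i => Δ k i - (M:ℝ)⁻¹ • ∑ j, Δ k j) ≤ frob (Δ k) :=
      frob_center_le hM0 _
    have h6 : frob (fun i => u i - (M:ℝ)⁻¹ • ∑ j, u j) ≤ frob u :=
      frob_center_le hM0 _
    have h7 : frob u ≤ amax k * frob (v k) := by
      apply frob_diag_le _ (hamax k)
      intro i
      rw [abs_of_nonneg (ha0 k i)]
      exact ha1 k i
    have h8 : 0 ≤ frob (fun i => Δ k i - (M:ℝ)⁻¹ • ∑ j, Δ k j) := frob_nonneg _
    nlinarith [frob_nonneg (Δ k)]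
  have hbase : frob (D 0) = 0 := by
    apply frob_zero_of
    intro i
    have : ∑ j, Wα 0 j = (M:ℝ) • Wα 0 i := by
      rw [show (∑ j, Wα 0 j) = ∑ _j : Fin M, Wα 0 i from
        Finset.sum_congr rfl fun j _ => h0 j i]
      rw [Finset.sum_const, Finset.card_univ, Fintype.card_fin,
        ← Nat.cast_smul_eq_nsmul ℝ]
    simp only [hDdef, this, smul_smul, inv_mul_cancel₀ hMne, one_smul, sub_self]
  intro k
  induction k with
  | zero =>
      have h := hstep 0
      rw [hbase, mul_zero, zero_add] at h
      show frob (D 1) ≤ _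
      simp only [zero_add, Finset.range_one, Finset.sup'_singleton, Finset.sum_singleton,
        Nat.sub_self, pow_zero, one_mul]
      show frob (D 1) ≤ 2 * frob (Δ 0) + frob (v 0) * amax 0
      linarith [h, mul_comm (amax 0) (frob (v 0))]
  | succ k IH =>
      have hWk : (Finset.range (k+1)).sup' Finset.nonempty_range_add_one
            (fun l => frob (fun i => Wβ l i - Wα l i))
          ≤ (Finset.range (k+2)).sup' Finset.nonempty_range_add_one
            (fun l => frob (fun i => Wβ l i - Wα l i)) := by
        apply Finset.sup'_le
        intro l hl
        have hmem : l ∈ Finset.range (k+2) := by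
          have := Finset.mem_range.mp hl
          exact Finset.mem_range.mpr (by omega)
        exact Finset.le_sup' (fun l => frob (fun i => Wβ l i - Wα l i)) hmem
      set Wk1 := (Finset.range (k+2)).sup' Finset.nonempty_range_add_one
            (fun l => frob (fun i => Wβ l i - Wα l i)) with hWk1def
      have hmem0 : (0:ℕ) ∈ Finset.range (k+2) := Finset.mem_range.mpr (by omega)
      have hmemk : k+1 ∈ Finset.range (k+2) := Finset.mem_range.mpr (by omega)
      have hWk1nn : 0 ≤ Wk1 := le_trans (frob_nonneg (fun i => Wβ 0 i - Wα 0 i))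
        (Finset.le_sup' (fun l => frob (fun i => Wβ l i - Wα l i)) hmem0)
      have hvle : frob (v (k+1)) ≤ Wk1 :=
        Finset.le_sup' (fun l => frob (fun i => Wβ l i - Wα l i)) hmemk
      have hshift : ∀ c : ℕ → ℝ,
          ∑ l ∈ Finset.range (k+2), lam ^ (k+1 - l) * c l
            = lam * ∑ l ∈ Finset.range (k+1), lam ^ (k - l) * c l + c (k+1) := by
        intro c
        rw [Finset.sum_range_succ, Nat.sub_self, pow_zero, one_mul, Finset.mul_sum]
        congr 1
        apply Finset.sum_congr rfl
        intro l hl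
        have hlk : l ≤ k := by have := Finset.mem_range.mp hl; omega
        rw [show k + 1 - l = (k - l) + 1 from by omega, pow_succ]
        ring
      have hS2nn : 0 ≤ ∑ l ∈ Finset.range (k+1), lam ^ (k - l) * amax l := by
        apply Finset.sum_nonneg
        intro l _
        exact mul_nonneg (pow_nonneg hlam0 _) (hamax l)
      have hIH := IH
      have hst := hstep (k+1)
      show frob (D (k+2)) ≤ _
      rw [hshift (fun l => frob (Δ l)), hshift amax]
      have hIH' : lam * frob (D (k+1))
          ≤ lam * (2 * ∑ l ∈ Finset.range (k+1), lam ^ (k - l) * frob (Δ l)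
            + ((Finset.range (k+1)).sup' Finset.nonempty_range_add_one
                (fun l => frob (fun i => Wβ l i - Wα l i)))
              * ∑ l ∈ Finset.range (k+1), lam ^ (k - l) * amax l) :=
        mul_le_mul_of_nonneg_left hIH hlam0
      have hmono : ((Finset.range (k+1)).sup' Finset.nonempty_range_add_one
              (fun l => frob (fun i => Wβ l i - Wα l i)))
            * ∑ l ∈ Finset.range (k+1), lam ^ (k - l) * amax l
          ≤ Wk1 * ∑ l ∈ Finset.range (k+1), lam ^ (k - l) * amax l :=
        mul_le_mul_of_nonneg_right hWk hS2nn
      have hva : amax (k+1) * frob (v (k+1)) ≤ amax (k+1) * Wk1 :=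
        mul_le_mul_of_nonneg_left hvle (hamax (k+1))
      nlinarith [mul_le_mul_of_nonneg_left hmono hlam0]
end

section
/- Let λ ∈ (0, 1) and γ > 0, and suppose λ^j ≤ 1/(j + 1) for every integer j ≥ 0. Then for every integer k ≥ 0, Σ_{l=0}^{k} λ^{k−l} · γ/(l + 1) ≤ 4γ / ((1 − λ)(k + 1)). -/
open Finset

private lemma geom_sum_le_inv (lam : ℝ) (h0 : 0 ≤ lam) (h1 : lam < 1) (n : ℕ) :
    ∑ j ∈ Finset.range n, lam ^ j ≤ 1 / (1 - lam) := by
  have hne : lam ≠ 1 := by linarith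
  have hd : (0:ℝ) < 1 - lam := by linarith
  have e : ∑ j ∈ Finset.range n, lam ^ j = (1 - lam ^ n) / (1 - lam) := by
    rw [geom_sum_eq hne, div_eq_div_iff (by linarith) (by linarith)]
    ring
  rw [e]
  gcongr
  nlinarith [pow_nonneg h0 n]

/-- Discrete convolution-series inequality of Lemma 10: with geometric factor `λ ∈ (0,1)`
satisfying `λ^j ≤ 1/(j+1)` and diminishing step sizes `γ/(l+1)`,
`∑_{l=0}^{k} λ^{k−l} γ/(l+1) ≤ 4γ/((1−λ)(k+1))`. -/
theorem convolution_series_bound (lam γ : ℝ) (hlam0 : 0 < lam) (hlam1 : lam < 1) (hγ : 0 < γ)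
    (hj : ∀ j : ℕ, lam ^ j ≤ 1 / ((j : ℝ) + 1)) :
    ∀ k : ℕ, ∑ l ∈ Finset.range (k+1), lam ^ (k - l) * (γ / ((l : ℝ) + 1))
      ≤ 4 * γ / ((1 - lam) * ((k : ℝ) + 1)) := by
  intro k
  set m := (k + 1) / 2 with hm
  have hmk : m ≤ k := by omega
  have hk1 : (0:ℝ) < (k:ℝ) + 1 := by positivity
  have hd : (0:ℝ) < 1 - lam := by linarith
  have hlamnn : (0:ℝ) ≤ lam := le_of_lt hlam0
  -- termwise bound
  have hterm : ∀ l ∈ Finset.range (k+1),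
      lam ^ (k - l) * (γ / ((l : ℝ) + 1))
        ≤ (2 * γ / ((k:ℝ) + 1)) * (if l < m then lam ^ (m - l) else lam ^ (k - l)) := by
    intro l hl
    rw [Finset.mem_range] at hl
    by_cases hlm : l < m
    · simp only [if_pos hlm]
      have hsplit : lam ^ (k - l) = lam ^ (k - m) * lam ^ (m - l) := by
        rw [← pow_add]; congr 1; omega
      have h1 : lam ^ (k - m) ≤ 2 / ((k:ℝ) + 1) := by
        have := hj (k - m)
        have hcast : ((k - m : ℕ) : ℝ) + 1 = (k:ℝ) - (m:ℝ) + 1 := by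
          push_cast [Nat.cast_sub hmk]; ring
        have h2m : (k:ℝ) + 1 ≤ 2 * (((k - m : ℕ)):ℝ) + 2 := by
          exact_mod_cast (by omega : k + 1 ≤ 2 * (k - m) + 2)
        calc lam ^ (k - m) ≤ 1 / (((k - m : ℕ) : ℝ) + 1) := this
          _ ≤ 2 / ((k:ℝ) + 1) := by
              rw [div_le_div_iff₀ (by positivity) hk1]
              linarith
      have hγl : γ / ((l:ℝ) + 1) ≤ γ := by
        rw [div_le_iff₀ (by positivity)]
        nlinarith [Nat.cast_nonneg (α := ℝ) l]
      have hpownn : (0:ℝ) ≤ lam ^ (m - l) := pow_nonneg hlamnn _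
      calc lam ^ (k - l) * (γ / ((l:ℝ) + 1))
          ≤ lam ^ (k - l) * γ := by
            apply mul_le_mul_of_nonneg_left hγl (pow_nonneg hlamnn _)
        _ = lam ^ (k - m) * (lam ^ (m - l) * γ) := by rw [hsplit]; ring
        _ ≤ (2 / ((k:ℝ) + 1)) * (lam ^ (m - l) * γ) := by
            apply mul_le_mul_of_nonneg_right h1 (by positivity)
        _ = (2 * γ / ((k:ℝ) + 1)) * lam ^ (m - l) := by ring
    · simp only [if_neg hlm]
      have hml : m ≤ l := le_of_not_gt hlm
      have h2l : (k:ℝ) + 1 ≤ 2 * ((l:ℝ) + 1) := by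
        exact_mod_cast (by omega : k + 1 ≤ 2 * (l + 1))
      have hγl : γ / ((l:ℝ) + 1) ≤ 2 * γ / ((k:ℝ) + 1) := by
        rw [div_le_div_iff₀ (by positivity) hk1]
        nlinarith
      calc lam ^ (k - l) * (γ / ((l:ℝ) + 1))
          ≤ lam ^ (k - l) * (2 * γ / ((k:ℝ) + 1)) := by
            apply mul_le_mul_of_nonneg_left hγl (pow_nonneg hlamnn _)
        _ = (2 * γ / ((k:ℝ) + 1)) * lam ^ (k - l) := by ring
  have hsum := Finset.sum_le_sum hterm
  -- split the rhs sum
  have hsplit : ∑ l ∈ Finset.range (k+1),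
      (2 * γ / ((k:ℝ) + 1)) * (if l < m then lam ^ (m - l) else lam ^ (k - l))
      = (2 * γ / ((k:ℝ) + 1)) * ((∑ l ∈ Finset.range m, lam ^ (m - l))
          + ∑ l ∈ Finset.Ico m (k+1), lam ^ (k - l)) := by
    rw [← Finset.mul_sum]
    congr 1
    rw [Finset.range_eq_Ico, ← Finset.sum_Ico_consecutive _ (Nat.zero_le m) (by omega : m ≤ k + 1),
      ← Finset.range_eq_Ico]
    congr 1
    · apply Finset.sum_congr rfl
      intro l hl
      rw [Finset.mem_range] at hl
      rw [if_pos hl]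
    · apply Finset.sum_congr rfl
      intro l hl
      rw [Finset.mem_Ico] at hl
      rw [if_neg (by omega)]
  -- geometric bounds
  have hg1 : ∑ l ∈ Finset.range m, lam ^ (m - l) ≤ 1 / (1 - lam) := by
    have e : ∑ l ∈ Finset.range m, lam ^ (m - l) = ∑ j ∈ Finset.range m, lam ^ (j + 1) := by
      rw [← Finset.sum_range_reflect (fun j => lam ^ (j + 1)) m]
      apply Finset.sum_congr rfl
      intro l hl
      rw [Finset.mem_range] at hl
      congr 1; omega
    rw [e]
    calc ∑ j ∈ Finset.range m, lam ^ (j + 1)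
        ≤ ∑ j ∈ Finset.range m, lam ^ j := by
          apply Finset.sum_le_sum
          intro j _
          exact pow_le_pow_of_le_one hlamnn (le_of_lt hlam1) (by omega)
      _ ≤ 1 / (1 - lam) := geom_sum_le_inv lam hlamnn hlam1 m
  have hg2 : ∑ l ∈ Finset.Ico m (k+1), lam ^ (k - l) ≤ 1 / (1 - lam) := by
    rw [Finset.sum_Ico_eq_sum_range]
    have e : ∑ j ∈ Finset.range (k + 1 - m), lam ^ (k - (m + j))
        = ∑ j ∈ Finset.range (k + 1 - m), lam ^ j := by
      rw [← Finset.sum_range_reflect (fun j => lam ^ j) (k + 1 - m)]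
      apply Finset.sum_congr rfl
      intro j hj'
      rw [Finset.mem_range] at hj'
      congr 1; omega
    rw [e]
    exact geom_sum_le_inv lam hlamnn hlam1 (k + 1 - m)
  -- put everything together
  have hpos : (0:ℝ) ≤ 2 * γ / ((k:ℝ) + 1) := by positivity
  calc ∑ l ∈ Finset.range (k+1), lam ^ (k - l) * (γ / ((l : ℝ) + 1))
      ≤ (2 * γ / ((k:ℝ) + 1)) * ((∑ l ∈ Finset.range m, lam ^ (m - l))
          + ∑ l ∈ Finset.Ico m (k+1), lam ^ (k - l)) := by rw [← hsplit]; exact hsum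
    _ ≤ (2 * γ / ((k:ℝ) + 1)) * (1 / (1 - lam) + 1 / (1 - lam)) := by
        apply mul_le_mul_of_nonneg_left (add_le_add hg1 hg2) hpos
    _ = 4 * γ / ((1 - lam) * ((k:ℝ) + 1)) := by
        field_simp
        ring
end

section
/- Let 0 ≤ c < c' be real numbers, and let Q denote the stochastic quantizer on [c, c'], i.e., for z ∈ [c, c'], Q(z) = c with probability (c' − z)/(c' − c) and Q(z) = c' with probability (z − c)/(c' − c). Then for any x, y ∈ [c, c'] with |x − y| ≤ C₄ and any subset S ⊆ {c, c'}, |Pr(Q(x) ∈ S) − Pr(Q(y) ∈ S)| ≤ C₄/(c' − c). In particular, if the spacing is c' − c = π a/(l − 1) for reals π, a > 0 and an integer l ≥ 2, then the quantizer satisfies (0, δ)-differential privacy on such pairs with δ = C₄ (l − 1)/(π a). -/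
open MeasureTheory

noncomputable def quantizerLaw (c c' z : ℝ) : Measure ℝ :=
  ENNReal.ofReal ((c' - z)/(c' - c)) • Measure.dirac c
    + ENNReal.ofReal ((z - c)/(c' - c)) • Measure.dirac c'

open Classical in
lemma quantizerLaw_toReal (c c' z : ℝ) (hcc : c < c') (hz : z ∈ Set.Icc c c')
    (S : Set ℝ) (hS : S ⊆ {c, c'}) :
    (quantizerLaw c c' z S).toReal
      = (if c ∈ S then (c' - z)/(c' - c) else 0)
        + (if c' ∈ S then (z - c)/(c' - c) else 0) := by
  have hcount : S.Countable := (((Set.countable_singleton c').insert c).mono hS)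
  have hmS : MeasurableSet S := hcount.measurableSet
  have hd : c' - c > 0 := by linarith
  have h1 : 0 ≤ (c' - z)/(c' - c) := div_nonneg (by linarith [hz.2]) hd.le
  have h2 : 0 ≤ (z - c)/(c' - c) := div_nonneg (by linarith [hz.1]) hd.le
  rw [quantizerLaw, Measure.add_apply, Measure.smul_apply, Measure.smul_apply,
    Measure.dirac_apply' _ hmS, Measure.dirac_apply' _ hmS]
  by_cases h : c ∈ S <;> by_cases h' : c' ∈ S <;>
    simp [Set.indicator_of_mem, Set.indicator_of_notMem, h, h', smul_eq_mul,
      ENNReal.toReal_add, ENNReal.toReal_ofReal, h1, h2, ENNReal.mul_ne_top,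
      ENNReal.ofReal_ne_top]

/-- Proposition 4, Case 1 (same-sign differential-privacy bound of the stochastic
quantizer): for `x, y ∈ [c, c']` with `|x − y| ≤ C₄` and any `S ⊆ {c, c'}`,
`|Pr(Q(x) ∈ S) − Pr(Q(y) ∈ S)| ≤ C₄/(c' − c)`; in particular, if the spacing is
`c' − c = πa/(l − 1)` the quantizer is `(0, δ)`-differentially private on such pairs
with `δ = C₄(l − 1)/(πa)`. -/
theorem quantizer_differential_privacy (c c' C4 : ℝ) (hc0 : 0 ≤ c) (hcc : c < c')
    (π a : ℝ) (hπ : 0 < π) (ha : 0 < a) (l : ℕ) (hl : 2 ≤ l)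
    (x y : ℝ) (hx : x ∈ Set.Icc c c') (hy : y ∈ Set.Icc c c')
    (hxy : |x - y| ≤ C4) (S : Set ℝ) (hS : S ⊆ {c, c'}) :
    |(quantizerLaw c c' x S).toReal - (quantizerLaw c c' y S).toReal| ≤ C4/(c' - c)
    ∧ (c' - c = π*a/((l : ℝ) - 1) →
        |(quantizerLaw c c' x S).toReal - (quantizerLaw c c' y S).toReal|
          ≤ C4 * ((l : ℝ) - 1)/(π*a)) := by
  classical
  have hd : (0:ℝ) < c' - c := by linarith
  have hC4 : 0 ≤ C4 := le_trans (abs_nonneg _) hxy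
  have hbound : |x - y| / (c' - c) ≤ C4 / (c' - c) := by gcongr
  have key : |(quantizerLaw c c' x S).toReal - (quantizerLaw c c' y S).toReal|
      ≤ C4/(c' - c) := by
    rw [quantizerLaw_toReal c c' x hcc hx S hS, quantizerLaw_toReal c c' y hcc hy S hS]
    by_cases h : c ∈ S <;> by_cases h' : c' ∈ S <;> simp only [h, h', if_true, if_false]
    · have : (c' - x) / (c' - c) + (x - c) / (c' - c) -
          ((c' - y) / (c' - c) + (y - c) / (c' - c)) = 0 := by field_simp; ring
      rw [this, abs_zero]
      positivity
    · have : (c' - x) / (c' - c) + 0 - ((c' - y) / (c' - c) + 0)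
          = (y - x) / (c' - c) := by field_simp; ring
      rw [this, abs_div, abs_of_pos hd, abs_sub_comm]
      exact hbound
    · have : 0 + (x - c) / (c' - c) - (0 + (y - c) / (c' - c))
          = (x - y) / (c' - c) := by field_simp; ring
      rw [this, abs_div, abs_of_pos hd]
      exact hbound
    · simpa using div_nonneg hC4 hd.le
  refine ⟨key, fun hspace => ?_⟩
  have hl2 : (2:ℝ) ≤ (l:ℝ) := by exact_mod_cast hl
  have heq : C4/(c'-c) = C4 * ((l:ℝ)-1)/(π*a) := by
    rw [hspace]
    have h1 : (l:ℝ) - 1 ≠ 0 := by linarith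
    field_simp
  linarith [heq ▸ key]
end

section
/- Let U be a symmetric positive definite M × M real matrix with smallest eigenvalue λ_min > 0, and let A = diag(a_1, …, a_M) be a diagonal matrix with 0 < a_i < λ_min/(1 + λ_min) for every i. Then the 2M × 2M block matrix P = [[U − A, A], [A, I − A]] is positive semidefinite. -/
open Matrix

private lemma rayleigh_lower {M : ℕ} (hM : 0 < M)
    (U : Matrix (Fin M) (Fin M) ℝ) (hU : U.PosDef)
    (lammin : ℝ) (hlam : lammin = ⨅ i, hU.1.eigenvalues i)
    (y : Fin M → ℝ) : lammin * (y ⬝ᵥ y) ≤ y ⬝ᵥ (U *ᵥ y) := by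
  haveI : Nonempty (Fin M) := ⟨⟨0, hM⟩⟩
  have hpsd : (U - lammin • 1).PosSemidef := by
    have hspec := hU.1.spectral_theorem
    set V : Matrix (Fin M) (Fin M) ℝ := (hU.1.eigenvectorUnitary : Matrix (Fin M) (Fin M) ℝ)
    have hVV : V * star V = 1 := (Matrix.mem_unitaryGroup_iff).mp hU.1.eigenvectorUnitary.2
    have hdec : U - lammin • 1
        = V * (diagonal (fun i => hU.1.eigenvalues i - lammin)) * star V := by
      have h1 : (lammin • (1 : Matrix (Fin M) (Fin M) ℝ))
          = V * (lammin • 1) * star V := by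
        rw [Matrix.mul_smul, Matrix.smul_mul, Matrix.mul_one, hVV]
      calc U - lammin • 1
          = V * diagonal (RCLike.ofReal ∘ hU.1.eigenvalues) * star V
            - V * (lammin • 1) * star V := by
              simp only [Unitary.conjStarAlgAut_apply, Unitary.coe_star] at hspec
              rw [← hspec, ← h1]
        _ = V * (diagonal (RCLike.ofReal ∘ hU.1.eigenvalues) - lammin • 1) * star V := by
            noncomm_ring
        _ = V * (diagonal (fun i => hU.1.eigenvalues i - lammin)) * star V := by
            congr 1
            congr 1
            ext i j
            rcases eq_or_ne i j with h | h
            · subst h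
              simp [Matrix.one_apply]
            · simp [Matrix.diagonal_apply_ne _ h, Matrix.one_apply_ne h]
    rw [hdec]
    have hdpsd : (diagonal (fun i => hU.1.eigenvalues i - lammin)).PosSemidef := by
      refine Matrix.PosSemidef.diagonal fun i => ?_
      have : lammin ≤ hU.1.eigenvalues i := by
        rw [hlam]
        exact ciInf_le (Finite.bddBelow_range _) i
      simp only [Pi.zero_apply]
      linarith
    have := hdpsd.mul_mul_conjTranspose_same V
    simpa [Matrix.star_eq_conjTranspose] using this
  have h := hpsd.dotProduct_mulVec_nonneg y
  have hstar : (star y : Fin M → ℝ) = y := by simp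
  rw [hstar] at h
  have : y ⬝ᵥ ((U - lammin • 1) *ᵥ y) = y ⬝ᵥ (U *ᵥ y) - lammin * (y ⬝ᵥ y) := by
    rw [Matrix.sub_mulVec, dotProduct_sub]
    congr 1
    rw [Matrix.smul_mulVec, Matrix.one_mulVec, dotProduct_smul]
    rfl
  linarith [h.trans_eq this]

/-- Positive semidefiniteness of the MSP-FL state-transition block matrix
`P = [[U − A, A], [A, I − A]]`, where `U` is symmetric positive definite with smallest
eigenvalue `λ_min > 0` and `A = diag(a₁, …, a_M)` with `0 < aᵢ < λ_min/(1 + λ_min)`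
(proved via the Schur complement in Lemma 8). -/
theorem blockMatrix_posSemidef {M : ℕ} (hM : 0 < M)
    (U : Matrix (Fin M) (Fin M) ℝ) (hU : U.PosDef)
    (lammin : ℝ) (hlam : lammin = ⨅ i, hU.1.eigenvalues i) (hlampos : 0 < lammin)
    (a : Fin M → ℝ) (ha : ∀ i, 0 < a i ∧ a i < lammin / (1 + lammin)) :
    (Matrix.fromBlocks (U - Matrix.diagonal a) (Matrix.diagonal a)
      (Matrix.diagonal a) (1 - Matrix.diagonal a)).PosSemidef := by
  classical
  refine Matrix.PosSemidef.of_dotProduct_mulVec_nonneg ?_ ?_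
  · rw [Matrix.isHermitian_fromBlocks_iff]
    refine ⟨?_, ?_, ?_, ?_⟩
    · exact (hU.1).sub (Matrix.isHermitian_diagonal _)
    · simp [Matrix.diagonal_conjTranspose]
    · simp [Matrix.diagonal_conjTranspose]
    · exact (Matrix.isHermitian_one).sub (Matrix.isHermitian_diagonal _)
  · intro x
    have hstar : (star x : Fin M ⊕ Fin M → ℝ) = x := by simp
    rw [hstar]
    set y : Fin M → ℝ := x ∘ Sum.inl with hy
    set z : Fin M → ℝ := x ∘ Sum.inr with hz
    have hx : x = Sum.elim y z := by
      funext i; cases i <;> rfl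
    rw [hx, Matrix.fromBlocks_mulVec, sumElim_dotProduct_sumElim]
    simp only [Sum.elim_comp_inl, Sum.elim_comp_inr]
    -- expand
    have expand : y ⬝ᵥ ((U - diagonal a) *ᵥ y + diagonal a *ᵥ z)
        + z ⬝ᵥ (diagonal a *ᵥ y + (1 - diagonal a) *ᵥ z)
        = y ⬝ᵥ (U *ᵥ y) +
          ∑ i, (- a i * y i ^ 2 + 2 * a i * y i * z i + (1 - a i) * z i ^ 2) := by
      simp only [dotProduct_add, Matrix.sub_mulVec, dotProduct_sub, Matrix.one_mulVec,
        dotProduct, Matrix.mulVec_diagonal, ← Finset.sum_add_distrib, ← Finset.sum_sub_distrib]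
      refine Finset.sum_congr rfl fun i _ => ?_
      simp only [Pi.add_apply, Pi.sub_apply, Matrix.mulVec_diagonal]
      ring
    rw [expand]
    have hray := rayleigh_lower hM U hU lammin hlam y
    have hyy : y ⬝ᵥ y = ∑ i, y i ^ 2 := by
      simp [dotProduct, sq]
    have hsum : 0 ≤ ∑ i, ((lammin - a i) * y i ^ 2 + 2 * a i * y i * z i
        + (1 - a i) * z i ^ 2) := by
      refine Finset.sum_nonneg fun i _ => ?_
      obtain ⟨hai, hai'⟩ := ha i
      have h1 : (0:ℝ) < 1 + lammin := by linarith
      have h2 : a i * (1 + lammin) < lammin := (lt_div_iff₀ h1).mp hai'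
      nlinarith [sq_nonneg ((lammin - a i) * y i + a i * z i), sq_nonneg (z i),
        mul_pos hai hlampos, sq_nonneg (y i)]
    have : ∑ i, ((lammin - a i) * y i ^ 2 + 2 * a i * y i * z i + (1 - a i) * z i ^ 2)
        = lammin * ∑ i, y i ^ 2
          + ∑ i, (- a i * y i ^ 2 + 2 * a i * y i * z i + (1 - a i) * z i ^ 2) := by
      rw [Finset.mul_sum, ← Finset.sum_add_distrib]
      congr 1; funext i; ring
    rw [this, ← hyy] at hsum
    linarith
end
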